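/- arXiv:1411.6414 — 4 statements merged into one kernel-verified Lean document; each statement's English description precedes it below -/
import Mathlib

section
/- Under conditions (P1)–(P2), the error bound modulus admits the equivalent representations: Er f(x̄,ȳ) = liminf_{x→x̄, y→ȳ, f(x,y)>0} f(x,y)/d(x,S(f)) = liminf_{x→x̄, f(x,y)↓0} f(x,y)/d(x,S(f)), where in the second representation the liminf is taken over pairs (x,y) with x → x̄, f(x,y) > 0 and f(x,y) → 0. -/
open Filter Metric Set Topology
open scoped Classical

noncomputable section

namespace HolderPaper

/-- Extended-real quotient `a / d` of an extended real by a nonnegative real,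
with the convention that division by `0` yields `⊤`. -/
def equot (a : EReal) (d : ℝ) : EReal := if d = 0 then ⊤ else a * ((d⁻¹ : ℝ) : EReal)

section MetricDefs

variable {X Y : Type*} [MetricSpace X] [MetricSpace Y]

/-- The asymmetric maximum-type distance `d_ρ((x,y),(u,v)) = max{d(x,u), ρ d(y,v)}`. -/
def drho (ρ : ℝ) (p q : X × Y) : ℝ := max (dist p.1 q.1) (ρ * dist p.2 q.2)

/-- Positive part `f₊`. -/
def fplus (f : X × Y → EReal) (p : X × Y) : EReal := max (f p) 0

/-- Condition (P1): `f(x,y) > 0` whenever `y ≠ ybar`. -/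
def P1 (f : X × Y → EReal) (ybar : Y) : Prop := ∀ p : X × Y, p.2 ≠ ybar → 0 < f p

/-- Condition (P2): `liminf_{f(x,y)↓0} f(x,y)/d(y,ybar) > 0`. -/
def P2 (f : X × Y → EReal) (ybar : Y) : Prop :=
  0 < liminf (fun p : X × Y => equot (f p) (dist p.2 ybar)) ((𝓝[>] (0 : EReal)).comap f)

/-- The lower 0-level set `S(f) = {x | f(x,ybar) ≤ 0}`. -/
def Sf (f : X × Y → EReal) (ybar : Y) : Set X := {x | f (x, ybar) ≤ 0}

/-- The error bound modulus `Er f(xbar,ybar)`: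
`liminf` of `f(x,y)/d(x,S(f))` over pairs `(x,y)` with `f(x,y) > 0` as `x → xbar`. -/
def erMod (f : X × Y → EReal) (xbar : X) (ybar : Y) : EReal :=
  liminf (fun p : X × Y => equot (f p) (infDist p.1 (Sf f ybar)))
    ((𝓝 xbar).comap Prod.fst ⊓ 𝓟 {p : X × Y | 0 < f p})

/-- `f` has an error bound w.r.t. `x` at `(xbar,ybar)` with constant `τ`. -/
def hasErrorBound (f : X × Y → EReal) (xbar : X) (ybar : Y) (τ : ℝ) : Prop :=
  ∃ U ∈ 𝓝 xbar, ∀ x ∈ U, ∀ y : Y, ((τ * infDist x (Sf f ybar) : ℝ) : EReal) ≤ fplus f (x, y)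

/-- The nonlocal ρ-slope `|∇f|◇_ρ(x,y)` (set to `⊤` if `f(x,y) = ⊤`). -/
def nslope (f : X × Y → EReal) (ρ : ℝ) (p : X × Y) : EReal :=
  if f p = ⊤ then ⊤
  else ⨆ (q : X × Y) (_ : q ≠ p), equot (max (f p - fplus f q) 0) (drho ρ p q)

/-- The (local) ρ-slope `|∇f|_ρ(x,y)`. -/
def lslope (f : X × Y → EReal) (ρ : ℝ) (p : X × Y) : EReal :=
  limsup (fun q : X × Y => equot (max (f p - f q) 0) (drho ρ q p)) (𝓝[≠] p)

/-- The uniform strict outer slope `\overline{|∇f|}^◇(xbar,ybar)`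
(`lim_{ρ↓0}` of a quantity nonincreasing in `ρ`, i.e. the supremum over `ρ > 0`). -/
def uss (f : X × Y → EReal) (xbar : X) (ybar : Y) : EReal :=
  ⨆ (ρ : ℝ) (_ : 0 < ρ),
    ⨅ (p : X × Y) (_ : dist p.1 xbar < ρ ∧ 0 < f p ∧ f p < (ρ : EReal)), nslope f ρ p

/-- The strict outer slope `\overline{|∇f|}^{>}(xbar,ybar)`. -/
def sos (f : X × Y → EReal) (xbar : X) (ybar : Y) : EReal :=
  ⨆ (ρ : ℝ) (_ : 0 < ρ),
    ⨅ (p : X × Y) (_ : dist p.1 xbar < ρ ∧ 0 < f p ∧ f p < (ρ : EReal)), lslope f ρ p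

/-- The modified strict outer slope `\overline{|∇f|}^{>+}(xbar,ybar)`. -/
def msos (f : X × Y → EReal) (xbar : X) (ybar : Y) : EReal :=
  ⨆ (ρ : ℝ) (_ : 0 < ρ),
    ⨅ (p : X × Y) (_ : dist p.1 xbar < ρ ∧ 0 < f p ∧ f p < (ρ : EReal)),
      max (lslope f ρ p) (equot (f p) (dist p.1 xbar))

/-- Graph of a set-valued mapping. -/
def gph (F : X → Set Y) : Set (X × Y) := {p | p.2 ∈ F p.1}

/-- Inverse image `F⁻¹(ybar)`. -/
def Finv (F : X → Set Y) (ybar : Y) : Set X := {x | ybar ∈ F x}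

/-- The function `f(x,y) = (d(y,ybar))^q` on `gph F`, `+∞` elsewhere. -/
def fFq (F : X → Set Y) (ybar : Y) (qq : ℝ) : X × Y → EReal :=
  fun p => if p ∈ gph F then ((dist p.2 ybar ^ qq : ℝ) : EReal) else ⊤

/-- The function `f(x,y) = ‖y - ybar‖` on `gph F`, `+∞` elsewhere (case `q = 1`). -/
def fF1 (F : X → Set Y) (ybar : Y) : X × Y → EReal :=
  fun p => if p ∈ gph F then ((dist p.2 ybar : ℝ) : EReal) else ⊤

/-- The ρ-slope `|∇F|_ρ(x,y)` of a set-valued mapping at `(x,y) ∈ gph F`. -/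
def FslopeR (F : X → Set Y) (ybar : Y) (ρ : ℝ) (p : X × Y) : EReal :=
  limsup (fun u : X × Y => equot ((max (dist p.2 ybar - dist u.2 ybar) 0 : ℝ) : EReal) (drho ρ u p))
    (𝓝[gph F \ {p}] p)

/-- The nonlocal (q,ρ)-slope `|∇F|◇_{q,ρ}(x,y)` of a set-valued mapping. -/
def FnslopeQ (F : X → Set Y) (ybar : Y) (qq ρ : ℝ) (p : X × Y) : EReal :=
  ⨆ (u : X × Y) (_ : u ∈ gph F ∧ u ≠ p),
    equot ((max (dist p.2 ybar ^ qq - dist u.2 ybar ^ qq) 0 : ℝ) : EReal) (drho ρ u p)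

/-- The uniform strict q-slope `\overline{|∇F|}^◇_q(xbar,ybar)`. -/
def ussFq (F : X → Set Y) (xbar : X) (ybar : Y) (qq : ℝ) : EReal :=
  ⨆ (ρ : ℝ) (_ : 0 < ρ),
    ⨅ (p : X × Y)
      (_ : p ∈ gph F ∧ dist p.1 xbar < ρ ∧ dist p.2 ybar < ρ ∧ p.1 ∉ Finv F ybar),
      FnslopeQ F ybar qq ρ p

/-- The strict q-slope `\overline{|∇F|}_q(xbar,ybar)`. -/
def sosFq (F : X → Set Y) (xbar : X) (ybar : Y) (qq : ℝ) : EReal :=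
  (qq : EReal) *
    ⨆ (ρ : ℝ) (_ : 0 < ρ),
      ⨅ (p : X × Y)
        (_ : p ∈ gph F ∧ dist p.1 xbar < ρ ∧ dist p.2 ybar < ρ ∧ p.1 ∉ Finv F ybar),
        ((dist p.2 ybar ^ (qq - 1) : ℝ) : EReal) * FslopeR F ybar ρ p

/-- The modified strict q-slope `\overline{|∇F|}^{+}_q(xbar,ybar)`. -/
def msosFq (F : X → Set Y) (xbar : X) (ybar : Y) (qq : ℝ) : EReal :=
  ⨆ (ρ : ℝ) (_ : 0 < ρ),
    ⨅ (p : X × Y)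
      (_ : p ∈ gph F ∧ dist p.1 xbar < ρ ∧ dist p.2 ybar < ρ ∧ p.1 ∉ Finv F ybar),
      max (((qq * dist p.2 ybar ^ (qq - 1) : ℝ) : EReal) * FslopeR F ybar ρ p)
        (equot ((dist p.2 ybar ^ qq : ℝ) : EReal) (dist p.1 xbar))

/-- The Hölder subregularity modulus of order `q`:
`liminf_{x→xbar, x∉F⁻¹(ybar)} (d(ybar,F(x)))^q / d(x,F⁻¹(ybar))`
(with `d(ybar,∅) = +∞`). -/
def srq (F : X → Set Y) (xbar : X) (ybar : Y) (qq : ℝ) : EReal :=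
  liminf
    (fun x : X =>
      equot (if F x = ∅ then ⊤ else ((infDist ybar (F x) ^ qq : ℝ) : EReal))
        (infDist x (Finv F ybar)))
    (𝓝[(Finv F ybar)ᶜ] xbar)

end MetricDefs

section NormedDefs

variable {X Y : Type*} [NormedAddCommGroup X] [NormedSpace ℝ X]
  [NormedAddCommGroup Y] [NormedSpace ℝ Y]

/-- The Fréchet subdifferential of `f : X × Y → ℝ∪{+∞}` at `p`, as a set of pairs of
continuous linear functionals (empty when `f p = ⊤`). -/
def fsubdiff (f : X × Y → EReal) (p : X × Y) : Set ((X →L[ℝ] ℝ) × (Y →L[ℝ] ℝ)) :=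
  {φ | f p ≠ ⊤ ∧ 0 ≤ liminf
      (fun q : X × Y =>
        equot (f q - f p - ((φ.1 (q.1 - p.1) + φ.2 (q.2 - p.2) : ℝ) : EReal)) (dist q p))
      (𝓝[≠] p)}

/-- The subdifferential ρ-slope `|∂f|_ρ(x,y)`. -/
def sdslope (f : X × Y → EReal) (ρ : ℝ) (p : X × Y) : EReal :=
  ⨅ (φ : (X →L[ℝ] ℝ) × (Y →L[ℝ] ℝ)) (_ : φ ∈ fsubdiff f p ∧ ‖φ.2‖ < ρ), (‖φ.1‖ : EReal)

/-- The strict outer subdifferential slope `\overline{|∂f|}^{>}(xbar,ybar)`. -/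
def ssds (f : X × Y → EReal) (xbar : X) (ybar : Y) : EReal :=
  ⨆ (ρ : ℝ) (_ : 0 < ρ),
    ⨅ (p : X × Y) (_ : dist p.1 xbar < ρ ∧ 0 < f p ∧ f p < (ρ : EReal)), sdslope f ρ p

/-- The modified strict outer subdifferential slope `\overline{|∂f|}^{>+}(xbar,ybar)`. -/
def mssds (f : X × Y → EReal) (xbar : X) (ybar : Y) : EReal :=
  ⨆ (ρ : ℝ) (_ : 0 < ρ),
    ⨅ (p : X × Y) (_ : dist p.1 xbar < ρ ∧ 0 < f p ∧ f p < (ρ : EReal)),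
      max (sdslope f ρ p) (equot (f p) (dist p.1 xbar))

/-- `f` is convex on the set `U` (with extended-real values). -/
def convexOnE (U : Set (X × Y)) (f : X × Y → EReal) : Prop :=
  Convex ℝ U ∧ ∀ p ∈ U, ∀ q ∈ U, ∀ t : ℝ, 0 ≤ t → t ≤ 1 →
    f (t • p + (1 - t) • q) ≤ (t : EReal) * f p + ((1 - t : ℝ) : EReal) * f q

/-- The Fréchet normal cone to `Ω ⊂ X × Y` at `p ∈ Ω`. -/
def ncone (Ω : Set (X × Y)) (p : X × Y) : Set ((X →L[ℝ] ℝ) × (Y →L[ℝ] ℝ)) :=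
  {φ | limsup
      (fun q : X × Y =>
        equot (((φ.1 (q.1 - p.1) + φ.2 (q.2 - p.2) : ℝ)) : EReal) (dist q p))
      (𝓝[Ω \ {p}] p) ≤ 0}

/-- The Fréchet coderivative `D*F(x,y)(y*)`. -/
def coderiv (F : X → Set Y) (p : X × Y) (ys : Y →L[ℝ] ℝ) : Set (X →L[ℝ] ℝ) :=
  {xs | (xs, -ys) ∈ ncone (gph F) p}

/-- The (normalized) duality mapping `J(y) = {y* : ‖y*‖ = 1, ⟨y*,y⟩ = ‖y‖}`. -/
def Jdual (y : Y) : Set (Y →L[ℝ] ℝ) := {ys | ‖ys‖ = 1 ∧ ys y = ‖y‖}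

/-- The subdifferential ρ-slope of `F` at `(x,y) ∈ gph F`:
`inf{‖x*‖ : x* ∈ D*F(x,y)(J(y-ybar) + ρ𝔹*)}`. -/
def FsdSlope (F : X → Set Y) (ybar : Y) (ρ : ℝ) (p : X × Y) : EReal :=
  ⨅ (xs : X →L[ℝ] ℝ)
    (_ : ∃ ws : Y →L[ℝ] ℝ, (∃ ys ∈ Jdual (p.2 - ybar), ‖ws - ys‖ ≤ ρ) ∧ xs ∈ coderiv F p ws),
    (‖xs‖ : EReal)

/-- `ξ_q(y) = ‖y - ybar‖^{1-q}/q`. -/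
def xiq (qq : ℝ) (ybar y : Y) : ℝ := ‖y - ybar‖ ^ (1 - qq) / qq

/-- The strict subdifferential q-slope `\overline{|∂F|}_q(xbar,ybar)`. -/
def ssdFq (F : X → Set Y) (xbar : X) (ybar : Y) (qq : ℝ) : EReal :=
  (qq : EReal) *
    ⨆ (ρ : ℝ) (_ : 0 < ρ),
      ⨅ (p : X × Y)
        (_ : p ∈ gph F ∧ ‖p.1 - xbar‖ < ρ ∧ ‖p.2 - ybar‖ < ρ ∧ p.1 ∉ Finv F ybar),
        ((‖p.2 - ybar‖ ^ (qq - 1) : ℝ) : EReal) * FsdSlope F ybar (xiq qq ybar p.2 * ρ) p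

/-- The modified strict subdifferential q-slope `\overline{|∂F|}^{+}_q(xbar,ybar)`. -/
def msdFq (F : X → Set Y) (xbar : X) (ybar : Y) (qq : ℝ) : EReal :=
  ⨆ (ρ : ℝ) (_ : 0 < ρ),
    ⨅ (p : X × Y)
      (_ : p ∈ gph F ∧ ‖p.1 - xbar‖ < ρ ∧ ‖p.2 - ybar‖ < ρ ∧ p.1 ∉ Finv F ybar),
      max (((qq * ‖p.2 - ybar‖ ^ (qq - 1) : ℝ) : EReal) * FsdSlope F ybar (xiq qq ybar p.2 * ρ) p)
        (equot ((‖p.2 - ybar‖ ^ qq : ℝ) : EReal) ‖p.1 - xbar‖)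

/-- The normalized ε-enlargement `J^q_ε(y)` of the q-duality mapping
`J^q(y) = q‖y‖^{q-1} J(y)`. -/
def JqEps (qq ε : ℝ) (y : Y) : Set (Y →L[ℝ] ℝ) :=
  {ws | ∃ us ∈ Jdual y, ∃ vs : Y →L[ℝ] ℝ, ‖vs‖ ≤ 1 ∧
    (qq * ‖y‖ ^ (qq - 1)) • us + ε • vs ≠ 0 ∧
    ws = ‖(qq * ‖y‖ ^ (qq - 1)) • us + ε • vs‖⁻¹ • ((qq * ‖y‖ ^ (qq - 1)) • us + ε • vs)}

/-- The constant `β` of Li and Mordukhovich. -/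
def betaLM (F : X → Set Y) (xbar : X) (ybar : Y) (qq : ℝ) : EReal :=
  ⨆ (ε : ℝ) (_ : 0 < ε),
    ⨅ (p : X × Y) (xs : X →L[ℝ] ℝ)
      (_ : p ∈ gph F ∧ p.1 ∉ Finv F ybar ∧ ‖p.1 - xbar‖ < ε ∧
           ‖p.2 - ybar‖ < min ε (‖p.1 - xbar‖ ^ (1 / 2 : ℝ)) ∧
           ∃ ws ∈ JqEps qq ε (p.2 - ybar), xs ∈ coderiv F p ws),
      ((qq * ‖xs‖ * ‖p.2 - ybar‖ ^ (qq - 1) : ℝ) : EReal)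

end NormedDefs

end HolderPaper

namespace HolderPaper


section Statement0Aux

lemma equot_zero (a : EReal) : equot a 0 = ⊤ := if_pos rfl

lemma equot_of_ne_zero (a : EReal) {d : ℝ} (hd : d ≠ 0) :
    equot a d = a * ((d⁻¹ : ℝ) : EReal) := if_neg hd

lemma exists_real_of_equot_lt {a : EReal} {d b : ℝ} (ha : 0 < a)
    (hd : 0 ≤ d) (h : equot a d < (b : EReal)) :
    ∃ r : ℝ, a = (r : EReal) ∧ 0 < r ∧ r < b * d := by
  have hd0 : d ≠ 0 := by
    rintro rfl
    rw [equot_zero] at h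
    exact not_top_lt h
  have hdpos : 0 < d := hd.lt_of_ne (Ne.symm hd0)
  rw [equot_of_ne_zero _ hd0] at h
  have hinv : (0 : EReal) < ((d⁻¹ : ℝ) : EReal) := by
    exact_mod_cast inv_pos.mpr hdpos
  have hatop : a ≠ ⊤ := by
    rintro rfl
    rw [EReal.top_mul_of_pos hinv] at h
    exact not_top_lt h
  have habot : a ≠ ⊥ := by
    rintro rfl
    simp at ha
  obtain ⟨r, rfl⟩ : ∃ r : ℝ, a = (r : EReal) := ⟨a.toReal, (EReal.coe_toReal hatop habot).symm⟩
  rw [← EReal.coe_mul, EReal.coe_lt_coe_iff] at h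
  exact ⟨r, rfl, EReal.coe_pos.mp ha, by rwa [← div_eq_mul_inv, div_lt_iff₀ hdpos] at h⟩

variable {X Y : Type*} [MetricSpace X] [MetricSpace Y]

set_option linter.unusedSectionVars false

lemma mem_comap_nhdsGT {f : X × Y → EReal} {s : Set (X × Y)}
    (hs : s ∈ (𝓝[>] (0 : EReal)).comap f) :
    ∃ ε : ℝ, 0 < ε ∧ ∀ p, 0 < f p → f p < (ε : EReal) → p ∈ s := by
  rw [mem_comap] at hs
  obtain ⟨V, hV, hVs⟩ := hs
  obtain ⟨u, hu, hsub⟩ :=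
    (mem_nhdsGT_iff_exists_Ioo_subset' (EReal.zero_lt_top)).mp hV
  obtain ⟨ε, hε0, hεu⟩ := EReal.exists_between_coe_real hu
  exact ⟨ε, EReal.coe_pos.mp hε0, fun p h1 h2 => hVs (hsub ⟨h1, h2.trans hεu⟩)⟩

lemma P2.extract {f : X × Y → EReal} {ybar : Y} (h : P2 f ybar) :
    ∃ c : ℝ, 0 < c ∧ ∃ ε : ℝ, 0 < ε ∧ ∀ p : X × Y, 0 < f p → f p < (ε : EReal) →
      (c : EReal) < equot (f p) (dist p.2 ybar) := by
  obtain ⟨c, hc0, hcl⟩ := EReal.exists_between_coe_real h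
  have hev : ∀ᶠ p in (𝓝[>] (0 : EReal)).comap f,
      (c : EReal) < equot (f p) (dist p.2 ybar) :=
    eventually_lt_of_lt_liminf hcl
  obtain ⟨ε, hε0, hmem⟩ := mem_comap_nhdsGT (Filter.eventually_iff.mp hev)
  exact ⟨c, EReal.coe_pos.mp hc0, ε, hε0, hmem⟩

lemma freq_point {f : X × Y → EReal} {xbar : X} {ybar : Y}
    (h0 : f (xbar, ybar) = 0) {b : ℝ}
    (hfreq : ∃ᶠ p in (𝓝 xbar).comap Prod.fst ⊓ 𝓟 {p : X × Y | 0 < f p},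
      equot (f p) (infDist p.1 (Sf f ybar)) < (b : EReal))
    {δ : ℝ} (hδ : 0 < δ) :
    ∃ p : X × Y, dist p.1 xbar < δ ∧ 0 < f p ∧
      equot (f p) (infDist p.1 (Sf f ybar)) < (b : EReal) ∧
      0 < b ∧ ∃ r : ℝ, f p = (r : EReal) ∧ 0 < r ∧ r < b * δ := by
  have hset : (Prod.fst ⁻¹' Metric.ball xbar δ) ∩ {p : X × Y | 0 < f p} ∈
      (𝓝 xbar).comap Prod.fst ⊓ 𝓟 {p : X × Y | 0 < f p} :=
    inter_mem_inf (preimage_mem_comap (Metric.ball_mem_nhds _ hδ)) (mem_principal_self _)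
  obtain ⟨p, hp, hgp⟩ := (Filter.frequently_iff.mp hfreq) hset
  obtain ⟨hpx, hpf⟩ := hp
  rw [Set.mem_preimage, Metric.mem_ball] at hpx
  have hxS : xbar ∈ Sf f ybar := le_of_eq h0
  have hdle : infDist p.1 (Sf f ybar) ≤ dist p.1 xbar := Metric.infDist_le_dist_of_mem hxS
  obtain ⟨r, hr, hr0, hrb⟩ := exists_real_of_equot_lt hpf Metric.infDist_nonneg hgp
  have hdnn : (0:ℝ) ≤ infDist p.1 (Sf f ybar) := Metric.infDist_nonneg
  have hb0 : 0 < b := by nlinarith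
  refine ⟨p, hpx, hpf, hgp, hb0, r, hr, hr0, ?_⟩
  calc r < b * infDist p.1 (Sf f ybar) := hrb
    _ ≤ b * dist p.1 xbar := mul_le_mul_of_nonneg_left hdle hb0.le
    _ < b * δ := mul_lt_mul_of_pos_left hpx hb0

lemma key2 {f : X × Y → EReal} {xbar : X} {ybar : Y}
    (h0 : f (xbar, ybar) = 0) (hP2 : P2 f ybar) {b : ℝ}
    (hfreq : ∃ᶠ p in (𝓝 xbar).comap Prod.fst ⊓ 𝓟 {p : X × Y | 0 < f p},
      equot (f p) (infDist p.1 (Sf f ybar)) < (b : EReal)) :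
    liminf (fun p : X × Y => equot (f p) (infDist p.1 (Sf f ybar)))
        ((𝓝 xbar).comap Prod.fst ⊓ (𝓝 ybar).comap Prod.snd ⊓ 𝓟 {p : X × Y | 0 < f p})
      ≤ (b : EReal) := by
  obtain ⟨_, _, _, _, hb0, _⟩ := freq_point h0 hfreq one_pos
  obtain ⟨c, hc0, ε₀, hε₀, hc⟩ := hP2.extract
  refine liminf_le_of_frequently_le ?_
  rw [Filter.frequently_iff]
  intro s hs
  obtain ⟨t1, ht1, t3, ht3, hsub⟩ := mem_inf_iff_superset.mp hs
  obtain ⟨ta, hta, tb, htb, hsub1⟩ := mem_inf_iff_superset.mp ht1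
  obtain ⟨U, hU, haU⟩ := mem_comap.mp hta
  obtain ⟨W, hW, hbW⟩ := mem_comap.mp htb
  obtain ⟨δ, hδ0, hδU⟩ := Metric.mem_nhds_iff.mp hU
  obtain ⟨γ, hγ0, hγW⟩ := Metric.mem_nhds_iff.mp hW
  have hm0 : 0 < min ε₀ (c * γ) := lt_min hε₀ (by positivity)
  set δ' := min δ (min ε₀ (c * γ) / (2 * b)) with hδ'def
  have hδ'0 : 0 < δ' := lt_min hδ0 (by positivity)
  obtain ⟨p, hpx, hpf, hgp, -, r, hfr, hr0, hrb⟩ := freq_point h0 hfreq hδ'0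
  have hrlt : r < min ε₀ (c * γ) := by
    have h1 : δ' ≤ min ε₀ (c * γ) / (2 * b) := min_le_right _ _
    have h2 : b * δ' ≤ min ε₀ (c * γ) / 2 := by
      calc b * δ' ≤ b * (min ε₀ (c * γ) / (2 * b)) := mul_le_mul_of_nonneg_left h1 hb0.le
        _ = min ε₀ (c * γ) / 2 := by field_simp
    linarith
  have hydist : dist p.2 ybar < γ := by
    rcases eq_or_ne (dist p.2 ybar) 0 with he | he
    · rw [he]; exact hγ0
    · have hfε : f p < (ε₀ : EReal) := by
        rw [hfr]; exact_mod_cast hrlt.trans_le (min_le_left _ _)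
      have hcq := hc p hpf hfε
      rw [hfr, equot_of_ne_zero _ he, ← EReal.coe_mul, EReal.coe_lt_coe_iff] at hcq
      have hepos : 0 < dist p.2 ybar := dist_nonneg.lt_of_ne (Ne.symm he)
      have h3 : c * dist p.2 ybar < r := by
        rwa [← div_eq_mul_inv, lt_div_iff₀ hepos] at hcq
      have h4 : r < c * γ := hrlt.trans_le (min_le_right _ _)
      nlinarith
  refine ⟨p, hsub ⟨hsub1 ⟨?_, ?_⟩, mem_principal.mp ht3 hpf⟩, hgp.le⟩
  · exact haU (hδU (Metric.mem_ball.mpr (hpx.trans_le (min_le_left _ _))))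
  · exact hbW (hγW (Metric.mem_ball.mpr hydist))

lemma key3 {f : X × Y → EReal} {xbar : X} {ybar : Y}
    (h0 : f (xbar, ybar) = 0) {b : ℝ}
    (hfreq : ∃ᶠ p in (𝓝 xbar).comap Prod.fst ⊓ 𝓟 {p : X × Y | 0 < f p},
      equot (f p) (infDist p.1 (Sf f ybar)) < (b : EReal)) :
    liminf (fun p : X × Y => equot (f p) (infDist p.1 (Sf f ybar)))
        ((𝓝 xbar).comap Prod.fst ⊓ (𝓝[>] (0 : EReal)).comap f)
      ≤ (b : EReal) := by
  obtain ⟨_, _, _, _, hb0, _⟩ := freq_point h0 hfreq one_pos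
  refine liminf_le_of_frequently_le ?_
  rw [Filter.frequently_iff]
  intro s hs
  obtain ⟨t1, ht1, t2, ht2, hsub⟩ := mem_inf_iff_superset.mp hs
  obtain ⟨U, hU, haU⟩ := mem_comap.mp ht1
  obtain ⟨δ, hδ0, hδU⟩ := Metric.mem_nhds_iff.mp hU
  obtain ⟨ε, hε0, hmem⟩ := mem_comap_nhdsGT ht2
  set δ' := min δ (ε / (2 * b)) with hδ'def
  have hδ'0 : 0 < δ' := lt_min hδ0 (by positivity)
  obtain ⟨p, hpx, hpf, hgp, -, r, hfr, hr0, hrb⟩ := freq_point h0 hfreq hδ'0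
  have hrε : r < ε := by
    have h1 : δ' ≤ ε / (2 * b) := min_le_right _ _
    have h2 : b * δ' ≤ ε / 2 := by
      calc b * δ' ≤ b * (ε / (2 * b)) := mul_le_mul_of_nonneg_left h1 hb0.le
        _ = ε / 2 := by field_simp
    linarith
  refine ⟨p, hsub ⟨?_, hmem p hpf ?_⟩, hgp.le⟩
  · exact haU (hδU (Metric.mem_ball.mpr (hpx.trans_le (min_le_left _ _))))
  · rw [hfr]; exact_mod_cast hrε

end Statement0Aux

/-- Under (P1)-(P2), the error bound modulus admits the equivalent
representations via `x → xbar, y → ybar, f(x,y) > 0` and via `x → xbar, f(x,y) ↓ 0`. -/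
theorem statement0 {X Y : Type*} [MetricSpace X] [MetricSpace Y]
    (f : X × Y → EReal) (xbar : X) (ybar : Y)
    (hbot : ∀ p, f p ≠ ⊥) (h0 : f (xbar, ybar) = 0)
    (hP1 : P1 f ybar) (hP2 : P2 f ybar) :
    erMod f xbar ybar =
      liminf (fun p : X × Y => equot (f p) (infDist p.1 (Sf f ybar)))
        ((𝓝 xbar).comap Prod.fst ⊓ (𝓝 ybar).comap Prod.snd ⊓ 𝓟 {p : X × Y | 0 < f p}) ∧
    erMod f xbar ybar =
      liminf (fun p : X × Y => equot (f p) (infDist p.1 (Sf f ybar)))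
        ((𝓝 xbar).comap Prod.fst ⊓ (𝓝[>] (0 : EReal)).comap f) := by
  have hF2le : (𝓝 xbar).comap Prod.fst ⊓ (𝓝 ybar).comap Prod.snd ⊓ 𝓟 {p : X × Y | 0 < f p}
      ≤ (𝓝 xbar).comap Prod.fst ⊓ 𝓟 {p : X × Y | 0 < f p} :=
    inf_le_inf_right _ inf_le_left
  have hF3le' : (𝓝[>] (0 : EReal)).comap f ≤ 𝓟 {p : X × Y | 0 < f p} :=
    le_principal_iff.mpr (mem_comap.mpr ⟨Ioi 0, self_mem_nhdsWithin, fun p hp => hp⟩)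
  have hF3le : (𝓝 xbar).comap Prod.fst ⊓ (𝓝[>] (0 : EReal)).comap f
      ≤ (𝓝 xbar).comap Prod.fst ⊓ 𝓟 {p : X × Y | 0 < f p} :=
    inf_le_inf_left _ hF3le'
  constructor
  · refine le_antisymm (liminf_le_liminf_of_le hF2le) ?_
    by_contra hlt
    push_neg at hlt
    obtain ⟨b, hb1, hb2⟩ := EReal.exists_between_coe_real hlt
    have hfreq := frequently_lt_of_liminf_lt (by isBoundedDefault) hb1
    exact absurd (key2 h0 hP2 hfreq) (not_le.mpr hb2)
  · refine le_antisymm (liminf_le_liminf_of_le hF3le) ?_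
    by_contra hlt
    push_neg at hlt
    obtain ⟨b, hb1, hb2⟩ := EReal.exists_between_coe_real hlt
    have hfreq := frequently_lt_of_liminf_lt (by isBoundedDefault) hb1
    exact absurd (key3 h0 hfreq) (not_le.mpr hb2)

end HolderPaper
end
end

section
/- Under conditions (P1)–(P2), the uniform strict outer slope, the modified strict outer slope and the strict outer slope satisfy the chain of inequalities \overline{|∇f|}^◇(x̄,ȳ) ≥ \overline{|∇f|}^{>+}(x̄,ȳ) ≥ \overline{|∇f|}^{>}(x̄,ȳ). -/
open Filter Metric Set Topology
open scoped Classical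

noncomputable section

namespace HolderPaper

section Aux

variable {X Y : Type*} [MetricSpace X] [MetricSpace Y]

lemma equot_eq_div (a : EReal) {d : ℝ} (hd : d ≠ 0) : equot a d = a / (d : EReal) := by
  rw [equot, if_neg hd, div_eq_mul_inv, ← EReal.coe_inv]

lemma equot_coe (r : ℝ) {d : ℝ} (hd : 0 < d) : equot (r : EReal) d = ((r / d : ℝ) : EReal) := by
  rw [equot, if_neg hd.ne', ← EReal.coe_mul, ← div_eq_mul_inv]

lemma equot_num_mono {a b : EReal} {d : ℝ} (hd : 0 ≤ d) (h : a ≤ b) :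
    equot a d ≤ equot b d := by
  rcases eq_or_lt_of_le hd with h0 | h0
  · simp [equot, ← h0]
  · rw [equot_eq_div _ h0.ne', equot_eq_div _ h0.ne']
    exact EReal.div_le_div_right_of_nonneg (by exact_mod_cast h0.le) h

lemma equot_denom_anti {a : EReal} {d e : ℝ} (ha : 0 ≤ a) (hd : 0 < d) (hde : d ≤ e) :
    equot a e ≤ equot a d := by
  have he : 0 < e := hd.trans_le hde
  rw [equot, if_neg he.ne', equot, if_neg hd.ne']
  refine mul_le_mul_of_nonneg_left ?_ ha
  exact_mod_cast (by gcongr : e⁻¹ ≤ d⁻¹)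

lemma coe_le_equot {c d : ℝ} {a : EReal} (hd : 0 < d) (h : ((c * d : ℝ) : EReal) ≤ a) :
    (c : EReal) ≤ equot a d := by
  rw [equot_eq_div _ hd.ne',
    EReal.le_div_iff_mul_le (by exact_mod_cast hd) (by simp), ← EReal.coe_mul]
  exact h

lemma mul_le_of_lt_equot {c d : ℝ} {a : EReal} (hd : 0 < d) (h : (c : EReal) < equot a d) :
    ((c * d : ℝ) : EReal) ≤ a := by
  by_contra hcon
  push_neg at hcon
  refine not_le.2 h ?_
  rw [equot_eq_div _ hd.ne', EReal.div_le_iff_le_mul (by exact_mod_cast hd) (by simp)]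
  refine le_trans hcon.le ?_
  rw [← EReal.coe_mul, mul_comm]

lemma drho_symm (ρ : ℝ) (p q : X × Y) : drho ρ q p = drho ρ p q := by
  simp [drho, dist_comm]

lemma drho_nonneg (ρ : ℝ) (p q : X × Y) : 0 ≤ drho ρ p q :=
  le_trans dist_nonneg (le_max_left _ _)

lemma drho_pos {ρ : ℝ} (hρ : 0 < ρ) {p q : X × Y} (h : q ≠ p) : 0 < drho ρ p q := by
  have h' : p.1 ≠ q.1 ∨ p.2 ≠ q.2 := by
    by_contra hcon
    push_neg at hcon
    exact h (Prod.ext hcon.1.symm hcon.2.symm)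
  rcases h' with h' | h'
  · exact lt_max_of_lt_left (dist_pos.2 h')
  · exact lt_max_of_lt_right (mul_pos hρ (dist_pos.2 h'))

lemma drho_mono_rho {ρ ρ' : ℝ} (h : ρ ≤ ρ') (p q : X × Y) : drho ρ p q ≤ drho ρ' p q :=
  max_le_max le_rfl (mul_le_mul_of_nonneg_right h dist_nonneg)

lemma drho_le_dist {ρ : ℝ} (hρ : 0 < ρ) (p q : X × Y) :
    drho ρ p q ≤ max 1 ρ * dist q p := by
  have hd : dist q p = max (dist q.1 p.1) (dist q.2 p.2) := Prod.dist_eq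
  have h1 : dist p.1 q.1 ≤ dist q p := by
    rw [dist_comm p.1 q.1, hd]; exact le_max_left _ _
  have h2 : dist p.2 q.2 ≤ dist q p := by
    rw [dist_comm p.2 q.2, hd]; exact le_max_right _ _
  have hq : (0:ℝ) ≤ dist q p := dist_nonneg
  refine max_le ?_ ?_
  · nlinarith [le_max_left (1:ℝ) ρ]
  · nlinarith [le_max_right (1:ℝ) ρ, dist_nonneg (x := p.2) (y := q.2)]

lemma le_nslope {f : X × Y → EReal} {ρ : ℝ} {p q : X × Y} (hf : f p ≠ ⊤) (hq : q ≠ p) :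
    equot (max (f p - fplus f q) 0) (drho ρ p q) ≤ nslope f ρ p := by
  rw [nslope, if_neg hf]
  exact le_iSup₂ (f := fun (q : X × Y) (_ : q ≠ p) =>
    equot (max (f p - fplus f q) 0) (drho ρ p q)) q hq

lemma fplus_of_nonpos {f : X × Y → EReal} {q : X × Y} (h : f q ≤ 0) : fplus f q = 0 := by
  rw [fplus]; exact max_eq_right h

lemma num_simp {f : X × Y → EReal} {p q : X × Y} (hp : 0 ≤ f p) (hq : f q ≤ 0) :
    max (f p - fplus f q) 0 = f p := by
  rw [fplus_of_nonpos hq]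
  have : f p - 0 = f p := by
    rw [sub_eq_add_neg, neg_zero, add_zero]
  rw [this, max_eq_left hp]

lemma nslope_top {f : X × Y → EReal} {ρ : ℝ} (hρ : 0 < ρ) {p : X × Y}
    (hfp : 0 < f p) (htop : f p ≠ ⊤)
    (h : ∀ ε > (0 : ℝ), ∃ q, q ≠ p ∧ dist q p < ε ∧ f q ≤ 0) : nslope f ρ p = ⊤ := by
  rw [eq_top_iff]
  refine le_of_forall_lt fun b hb => ?_
  obtain ⟨r, hbr, -⟩ := EReal.exists_between_coe_real hb
  obtain ⟨s, hs0, hsf⟩ := EReal.exists_between_coe_real hfp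
  have hs0' : (0:ℝ) < s := by exact_mod_cast hs0
  set K : ℝ := max 1 ρ with hK
  have hK0 : 0 < K := lt_of_lt_of_le one_pos (le_max_left _ _)
  have hr1 : (0:ℝ) < |r| + 1 := by positivity
  set ε : ℝ := s / (K * (|r| + 1)) with hε
  have hε0 : 0 < ε := by positivity
  obtain ⟨q, hqp, hqd, hqf⟩ := h ε hε0
  have hden : 0 < drho ρ p q := drho_pos hρ hqp
  have hden' : drho ρ p q ≤ K * ε := le_trans (drho_le_dist hρ p q)
    (mul_le_mul_of_nonneg_left hqd.le hK0.le)
  calc b < (r : EReal) := hbr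
    _ ≤ ((|r| + 1 : ℝ) : EReal) := by
        exact_mod_cast le_trans (le_abs_self r) (by linarith)
    _ = equot (s : EReal) (K * ε) := by
        rw [equot_coe _ (by positivity)]
        congr 1
        field_simp [hε]
        rw [hε]; field_simp
    _ ≤ equot (s : EReal) (drho ρ p q) := equot_denom_anti (by exact_mod_cast hs0'.le) hden hden'
    _ ≤ equot (f p) (drho ρ p q) := equot_num_mono (drho_nonneg _ _ _) hsf.le
    _ = equot (max (f p - fplus f q) 0) (drho ρ p q) := by rw [num_simp hfp.le hqf]
    _ ≤ nslope f ρ p := le_nslope htop hqp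

end Aux

/-- under (P1)-(P2),
`\overline{|∇f|}^◇ ≥ \overline{|∇f|}^{>+} ≥ \overline{|∇f|}^{>}`. -/
theorem statement2 {X Y : Type*} [MetricSpace X] [MetricSpace Y]
    (f : X × Y → EReal) (xbar : X) (ybar : Y)
    (hbot : ∀ p, f p ≠ ⊥) (h0 : f (xbar, ybar) = 0)
    (hP1 : P1 f ybar) (hP2 : P2 f ybar) :
    sos f xbar ybar ≤ msos f xbar ybar ∧ msos f xbar ybar ≤ uss f xbar ybar := by
  constructor
  · exact iSup_mono fun ρ => iSup_mono fun _ => iInf_mono fun p =>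
      iInf_mono fun _ => le_max_left _ _
  -- the hard inequality
  refine le_of_forall_lt fun γ hγ => ?_
  rw [msos, lt_iSup_iff] at hγ
  obtain ⟨ρ', hρ'⟩ := hγ
  rw [lt_iSup_iff] at hρ'
  obtain ⟨hρ'0, hγI⟩ := hρ'
  -- the constant from (P2)
  obtain ⟨c, hc0, hcl⟩ := EReal.exists_between_coe_real hP2
  have hc0' : (0:ℝ) < c := by exact_mod_cast hc0
  have hev := eventually_lt_of_lt_liminf hcl
  rw [Filter.eventually_comap] at hev
  obtain ⟨δE, hδE0, hδE⟩ := (nhdsGT_basis_of_exists_gt ⟨1, by norm_num⟩).eventually_iff.1 hev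
  obtain ⟨δ, hδ0, hδlt⟩ := EReal.exists_between_coe_real hδE0
  have hδ0' : (0:ℝ) < δ := by exact_mod_cast hδ0
  have hkey : ∀ p : X × Y, 0 < f p → f p < (δ : EReal) →
      (c : EReal) < equot (f p) (dist p.2 ybar) := by
    intro p h1 h2
    exact hδE ⟨h1, h2.trans hδlt⟩ p rfl
  -- a real number above γ
  have hγtop : γ < (⊤ : EReal) := lt_of_lt_of_le hγI le_top
  obtain ⟨g, hγg, -⟩ := EReal.exists_between_coe_real hγtop
  have hg1 : (0:ℝ) < |g| + 1 := by positivity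
  -- the small ρ₀
  set ρ0 : ℝ := min ρ' (min δ (c / (|g| + 1))) with hρ0
  have hρ00 : 0 < ρ0 := lt_min hρ'0 (lt_min hδ0' (by positivity))
  have hρ0ρ' : ρ0 ≤ ρ' := min_le_left _ _
  have hρ0δ : ρ0 ≤ δ := le_trans (min_le_right _ _) (min_le_left _ _)
  have hρ0g : ρ0 ≤ c / (|g| + 1) := le_trans (min_le_right _ _) (min_le_right _ _)
  have hgc : g < c / ρ0 := by
    have h1 : (|g| + 1) * ρ0 ≤ c := by
      calc (|g| + 1) * ρ0 ≤ (|g| + 1) * (c / (|g| + 1)) := by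
            exact mul_le_mul_of_nonneg_left hρ0g hg1.le
        _ = c := by field_simp
    have h2 : |g| + 1 ≤ c / ρ0 := (le_div_iff₀ hρ00).2 h1
    calc g ≤ |g| := le_abs_self g
      _ < |g| + 1 := by linarith
      _ ≤ c / ρ0 := h2
  -- the lower bound for the infimum
  set I' : EReal := ⨅ (p : X × Y)
      (_ : dist p.1 xbar < ρ' ∧ 0 < f p ∧ f p < (ρ' : EReal)),
      max (lslope f ρ' p) (equot (f p) (dist p.1 xbar)) with hI'
  set m : EReal := min I' ((c / ρ0 : ℝ) : EReal) with hm
  have hγm : γ < m := by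
    refine lt_min hγI ?_
    exact lt_trans hγg (by exact_mod_cast hgc)
  -- the key estimate
  have key : ∀ p : X × Y,
      dist p.1 xbar < ρ0 ∧ 0 < f p ∧ f p < (ρ0 : EReal) → m ≤ nslope f ρ0 p := by
    rintro ⟨x, y⟩ ⟨hx, hfp, hfρ⟩
    set p : X × Y := (x, y) with hp
    have htop : f p ≠ ⊤ := ne_top_of_lt hfρ
    have hq0 : ((xbar, ybar) : X × Y) ≠ p := by
      intro hcon
      rw [← hcon, h0] at hfp
      exact lt_irrefl _ hfp
    have hb1 : ∀ {d : ℝ}, drho ρ0 p (xbar, ybar) = d →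
        equot (f p) d ≤ nslope f ρ0 p := by
      intro d hd
      rw [← hd, ← num_simp hfp.le (le_of_eq h0)]
      exact le_nslope htop hq0
    rcases le_or_gt (ρ0 * dist y ybar) (dist x xbar) with hA | hB
    · -- Case A : drho = dist x xbar
      have hdx : 0 < dist x xbar := by
        by_contra hcon
        push_neg at hcon
        have hxx : x = xbar := dist_le_zero.1 hcon
        have hy : dist y ybar = 0 := by
          rw [hxx, dist_self] at hA
          nlinarith [dist_nonneg (x := y) (y := ybar), mul_nonneg hρ00.le (dist_nonneg (x := y) (y := ybar))]
        have hyy : y = ybar := dist_le_zero.1 hy.le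
        have hzero : f p = 0 := by rw [hp, hxx, hyy]; exact h0
        rw [hzero] at hfp
        exact lt_irrefl _ hfp
      have hdrho : drho ρ0 p (xbar, ybar) = dist x xbar := max_eq_left hA
      have hb1' : equot (f p) (dist x xbar) ≤ nslope f ρ0 p := hb1 hdrho
      by_cases hev2 : ∀ᶠ q in 𝓝[≠] p, 0 ≤ f q
      · -- local slope bounded by nonlocal one
        have hlsl : lslope f ρ' p ≤ nslope f ρ0 p := by
          refine Filter.limsup_le_of_le ?_ ?_
          · isBoundedDefault
          filter_upwards [hev2, eventually_mem_nhdsWithin] with q hq0' hqp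
          have hqp' : q ≠ p := hqp
          have hnum0 : (0 : EReal) ≤ max (f p - f q) 0 := le_max_right _ _
          calc equot (max (f p - f q) 0) (drho ρ' q p)
              = equot (max (f p - f q) 0) (drho ρ' p q) := by rw [drho_symm]
            _ ≤ equot (max (f p - f q) 0) (drho ρ0 p q) :=
                equot_denom_anti hnum0 (drho_pos hρ00 hqp') (drho_mono_rho hρ0ρ' p q)
            _ = equot (max (f p - fplus f q) 0) (drho ρ0 p q) := by
                simp only [fplus, max_eq_left hq0']
            _ ≤ nslope f ρ0 p := le_nslope htop hqp'
        have hadm : dist p.1 xbar < ρ' ∧ 0 < f p ∧ f p < (ρ' : EReal) :=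
          ⟨lt_of_lt_of_le hx hρ0ρ', hfp, lt_of_lt_of_le hfρ (by exact_mod_cast hρ0ρ')⟩
        calc m ≤ I' := min_le_left _ _
          _ ≤ max (lslope f ρ' p) (equot (f p) (dist p.1 xbar)) := iInf₂_le p hadm
          _ ≤ nslope f ρ0 p := max_le hlsl hb1'
      · -- points with nonpositive value accumulate at p : nonlocal slope is ⊤
        rw [Filter.not_eventually] at hev2
        have htopn : nslope f ρ0 p = ⊤ := by
          refine nslope_top hρ00 hfp htop fun ε hε => ?_
          have hball : ∀ᶠ q in 𝓝[≠] p, dist q p < ε := by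
            refine eventually_nhdsWithin_of_eventually_nhds ?_
            exact Metric.ball_mem_nhds p hε
          obtain ⟨q, hq1, hq2, hq3⟩ :=
            (hev2.and_eventually (hball.and eventually_mem_nhdsWithin)).exists
          exact ⟨q, hq3, hq2, (not_le.1 hq1).le⟩
        rw [htopn]
        exact le_top
    · -- Case B : drho = ρ0 * dist y ybar, use (P2)
      have hdy : 0 < dist y ybar := by
        by_contra hcon
        push_neg at hcon
        have : dist y ybar = 0 := le_antisymm hcon dist_nonneg
        rw [this, mul_zero] at hB
        exact absurd hB (not_lt.2 dist_nonneg)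
      have hdrho : drho ρ0 p (xbar, ybar) = ρ0 * dist y ybar := max_eq_right hB.le
      have hcd : ((c * dist y ybar : ℝ) : EReal) ≤ f p := by
        refine mul_le_of_lt_equot hdy ?_
        exact hkey p hfp (lt_of_lt_of_le hfρ (by exact_mod_cast hρ0δ))
      calc m ≤ ((c / ρ0 : ℝ) : EReal) := min_le_right _ _
        _ = equot ((c * dist y ybar : ℝ) : EReal) (ρ0 * dist y ybar) := by
            rw [equot_coe _ (by positivity)]
            norm_cast
            rw [mul_comm c (dist y ybar), mul_comm ρ0 (dist y ybar),
              mul_div_mul_left _ _ hdy.ne']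
        _ ≤ equot (f p) (ρ0 * dist y ybar) := equot_num_mono (by positivity) hcd
        _ ≤ nslope f ρ0 p := hb1 hdrho
  -- conclude
  have hinf : m ≤ ⨅ (p : X × Y)
      (_ : dist p.1 xbar < ρ0 ∧ 0 < f p ∧ f p < (ρ0 : EReal)), nslope f ρ0 p :=
    le_iInf₂ key
  calc γ < m := hγm
    _ ≤ _ := hinf
    _ ≤ uss f xbar ybar := le_iSup₂ (f := fun (ρ : ℝ) (_ : 0 < ρ) =>
        ⨅ (p : X × Y) (_ : dist p.1 xbar < ρ ∧ 0 < f p ∧ f p < (ρ : EReal)),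
          nslope f ρ p) ρ0 hρ00

end HolderPaper
end
end

section
/- If X and Y are normed linear spaces, then \overline{|∇f|}^{>}(x̄,ȳ) ≤ \overline{|∂f|}^{>}(x̄,ȳ) and \overline{|∇f|}^{>+}(x̄,ȳ) ≤ \overline{|∂f|}^{>+}(x̄,ȳ). -/
open Filter Metric Set Topology
open scoped Classical

noncomputable section

namespace HolderPaper

private lemma ereal_le_of_forall_add {a b : EReal} (h : ∀ ε : ℝ, 0 < ε → a ≤ b + (ε : EReal)) :
    a ≤ b := by
  induction b using EReal.rec with
  | top => exact le_top
  | bot =>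
    have := h 1 one_pos
    rw [EReal.bot_add] at this
    exact this.trans bot_le
  | coe r =>
    induction a using EReal.rec with
    | bot => exact bot_le
    | top =>
      have := h 1 one_pos
      rw [← EReal.coe_add] at this
      exact absurd (top_le_iff.1 this) (EReal.coe_ne_top _)
    | coe s =>
      refine EReal.coe_le_coe_iff.2 ?_
      by_contra hs
      push_neg at hs
      have := h ((s - r) / 2) (by linarith)
      rw [← EReal.coe_add, EReal.coe_le_coe_iff] at this
      linarith

private lemma ereal_le_iInf_add {ι : Sort*} {g : ι → EReal} {a : EReal} {c : ℝ}
    (hg : ∀ i, 0 ≤ g i) (h : ∀ i, a ≤ g i + (c : EReal)) : a ≤ (⨅ i, g i) + (c : EReal) := by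
  have hm0 : 0 ≤ ⨅ i, g i := le_iInf hg
  rcases eq_or_ne (⨅ i, g i) ⊤ with ht | ht
  · rw [ht, EReal.top_add_coe]; exact le_top
  · have hb : (⨅ i, g i) ≠ ⊥ := fun hb => by simp [hb] at hm0
    obtain ⟨t, htm⟩ : ∃ t : ℝ, (⨅ i, g i) = (t : EReal) :=
      ⟨(⨅ i, g i).toReal, (EReal.coe_toReal ht hb).symm⟩
    rw [htm]
    apply ereal_le_of_forall_add
    intro δ hδ
    have hlt : (⨅ i, g i) < ((t + δ : ℝ) : EReal) := by
      rw [htm]; exact_mod_cast (by linarith : t < t + δ)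
    obtain ⟨i, hi⟩ := iInf_lt_iff.1 hlt
    calc a ≤ g i + (c : EReal) := h i
      _ ≤ ((t + δ : ℝ) : EReal) + (c : EReal) := add_le_add_left hi.le _
      _ = ((t : ℝ) : EReal) + (c : EReal) + (δ : EReal) := by
          rw [← EReal.coe_add, ← EReal.coe_add, ← EReal.coe_add]; ring_nf

private lemma lslope_le_subgrad {X Y : Type*} [NormedAddCommGroup X] [NormedSpace ℝ X]
    [NormedAddCommGroup Y] [NormedSpace ℝ Y]
    {f : X × Y → EReal} (hbot : ∀ p, f p ≠ ⊥) {ρ ε : ℝ} (hρ : 0 < ρ) (hε : 0 < ε)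
    {p : X × Y} {φ : (X →L[ℝ] ℝ) × (Y →L[ℝ] ℝ)} (hφ : φ ∈ fsubdiff f p) :
    lslope f ρ p ≤ ((‖φ.1‖ + ‖φ.2‖ / ρ + ε : ℝ) : EReal) := by
  obtain ⟨hftop, hlin⟩ := hφ
  set r : ℝ := (f p).toReal with hrdef
  have hfp : f p = (r : EReal) := (EReal.coe_toReal hftop (hbot p)).symm
  set ε' : ℝ := ε * min 1 ρ with hε'def
  have hε' : 0 < ε' := mul_pos hε (lt_min one_pos hρ)
  have hC : 0 ≤ ‖φ.1‖ + ‖φ.2‖ / ρ + ε := by positivity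
  have hev : ∀ᶠ q in 𝓝[≠] p, ((-ε' : ℝ) : EReal) <
      equot (f q - f p - ((φ.1 (q.1 - p.1) + φ.2 (q.2 - p.2) : ℝ) : EReal)) (dist q p) := by
    refine eventually_lt_of_lt_liminf (lt_of_lt_of_le ?_ hlin)
    exact_mod_cast (by linarith : -ε' < (0:ℝ))
  refine Filter.limsup_le_of_le (by isBoundedDefault) ?_
  filter_upwards [hev, self_mem_nhdsWithin] with q hq hqp
  replace hqp : q ≠ p := hqp
  have hd : (0:ℝ) < dist q p := dist_pos.2 hqp
  set d1 : ℝ := dist q.1 p.1 with hd1def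
  set d2 : ℝ := dist q.2 p.2 with hd2def
  have hd1 : (0:ℝ) ≤ d1 := dist_nonneg
  have hd2 : (0:ℝ) ≤ d2 := dist_nonneg
  have hdeq : dist q p = max d1 d2 := Prod.dist_eq
  set D : ℝ := drho ρ q p with hDdef'
  have hDdef : D = max d1 (ρ * d2) := rfl
  have hD : 0 < D := by
    rw [hDdef]
    rcases lt_max_iff.1 (hdeq ▸ hd) with h1 | h2
    · exact lt_max_of_lt_left h1
    · exact lt_max_of_lt_right (mul_pos hρ h2)
  simp only [equot]
  rw [if_neg hD.ne']
  by_cases hfq : f q = ⊤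
  · rw [hfp, hfq, EReal.sub_top, max_eq_right bot_le, zero_mul]
    exact EReal.coe_nonneg.2 hC
  · obtain ⟨s, hs⟩ : ∃ s : ℝ, f q = (s : EReal) :=
      ⟨(f q).toReal, (EReal.coe_toReal hfq (hbot q)).symm⟩
    set L : ℝ := φ.1 (q.1 - p.1) + φ.2 (q.2 - p.2) with hLdef
    simp only [equot] at hq
    rw [if_neg hd.ne', hs, hfp, ← EReal.coe_sub, ← EReal.coe_sub, ← EReal.coe_mul,
      EReal.coe_lt_coe_iff] at hq
    -- hq : -ε' < (s - r - L) * (dist q p)⁻¹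
    have h2' : -ε' * dist q p < s - r - L := by
      have := (lt_div_iff₀ hd).1 (by rw [div_eq_mul_inv]; exact hq)
      linarith
    have hb1 : |φ.1 (q.1 - p.1)| ≤ ‖φ.1‖ * d1 := by
      rw [hd1def, dist_eq_norm, ← Real.norm_eq_abs]
      exact (φ.1).le_opNorm _
    have hb2 : |φ.2 (q.2 - p.2)| ≤ ‖φ.2‖ * d2 := by
      rw [hd2def, dist_eq_norm, ← Real.norm_eq_abs]
      exact (φ.2).le_opNorm _
    have hkey : r - s < ‖φ.1‖ * d1 + ‖φ.2‖ * d2 + ε' * dist q p := by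
      have g1 := (abs_le.1 hb1).1
      have g2 := (abs_le.1 hb2).1
      rw [hLdef] at h2'
      nlinarith [h2']
    have hd1D : d1 ≤ D := by rw [hDdef]; exact le_max_left _ _
    have hd2D : ρ * d2 ≤ D := by rw [hDdef]; exact le_max_right _ _
    have hεd : ε' * dist q p ≤ ε * D := by
      rw [hdeq]
      rcases le_total d1 d2 with h | h
      · rw [max_eq_right h]
        calc ε' * d2 = ε * (min 1 ρ * d2) := by rw [hε'def]; ring
          _ ≤ ε * (ρ * d2) :=
            mul_le_mul_of_nonneg_left
              (mul_le_mul_of_nonneg_right (min_le_right _ _) hd2) hε.le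
          _ ≤ ε * D := mul_le_mul_of_nonneg_left hd2D hε.le
      · rw [max_eq_left h]
        calc ε' * d1 = ε * (min 1 ρ * d1) := by rw [hε'def]; ring
          _ ≤ ε * (1 * d1) :=
            mul_le_mul_of_nonneg_left
              (mul_le_mul_of_nonneg_right (min_le_left _ _) hd1) hε.le
          _ ≤ ε * D := by rw [one_mul]; exact mul_le_mul_of_nonneg_left hd1D hε.le
    have hf2 : ‖φ.2‖ * d2 ≤ (‖φ.2‖ / ρ) * D := by
      have heq : ‖φ.2‖ * d2 = (‖φ.2‖ / ρ) * (ρ * d2) := by field_simp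
      rw [heq]
      exact mul_le_mul_of_nonneg_left hd2D (by positivity)
    have hf1 : ‖φ.1‖ * d1 ≤ ‖φ.1‖ * D := mul_le_mul_of_nonneg_left hd1D (norm_nonneg _)
    rw [hs, hfp, ← EReal.coe_sub]
    have hmax : max ((r - s : ℝ) : EReal) 0 = ((max (r - s) 0 : ℝ) : EReal) := by
      rw [show (0 : EReal) = ((0:ℝ) : EReal) from rfl]
      exact (EReal.coe_strictMono.monotone.map_max)
    rw [hmax, ← EReal.coe_mul, EReal.coe_le_coe_iff, ← div_eq_mul_inv, div_le_iff₀ hD]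
    refine max_le ?_ (by positivity)
    have hCD : (‖φ.1‖ + ‖φ.2‖ / ρ + ε) * D = ‖φ.1‖ * D + (‖φ.2‖ / ρ) * D + ε * D := by ring
    rw [hCD]
    linarith

private lemma sdslope_nonneg {X Y : Type*} [NormedAddCommGroup X] [NormedSpace ℝ X]
    [NormedAddCommGroup Y] [NormedSpace ℝ Y] (f : X × Y → EReal) (ρ : ℝ) (p : X × Y) :
    0 ≤ sdslope f ρ p :=
  le_iInf fun _ => le_iInf fun _ => EReal.coe_nonneg.2 (norm_nonneg _)

private lemma generic_slope_le {X Y : Type*} [NormedAddCommGroup X] [NormedSpace ℝ X]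
    [NormedAddCommGroup Y] [NormedSpace ℝ Y]
    (f : X × Y → EReal) (xbar : X) (hbot : ∀ p, f p ≠ ⊥) (E : X × Y → EReal) :
    (⨆ (ρ : ℝ) (_ : 0 < ρ),
      ⨅ (p : X × Y) (_ : dist p.1 xbar < ρ ∧ 0 < f p ∧ f p < (ρ : EReal)),
        max (lslope f ρ p) (E p)) ≤
    ⨆ (ρ : ℝ) (_ : 0 < ρ),
      ⨅ (p : X × Y) (_ : dist p.1 xbar < ρ ∧ 0 < f p ∧ f p < (ρ : EReal)),
        max (sdslope f ρ p) (E p) := by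
  refine iSup₂_le fun ρ hρ => ?_
  apply ereal_le_of_forall_add
  intro ε hε
  set ρ' : ℝ := min ρ (ε * ρ / 2) with hρ'def
  have hρ'pos : 0 < ρ' := lt_min hρ (by positivity)
  have hρ'le : ρ' ≤ ρ := min_le_left _ _
  have hRHS : (⨅ (p : X × Y) (_ : dist p.1 xbar < ρ' ∧ 0 < f p ∧ f p < (ρ' : EReal)),
      max (sdslope f ρ' p) (E p)) ≤
      ⨆ (ρ : ℝ) (_ : 0 < ρ),
        ⨅ (p : X × Y) (_ : dist p.1 xbar < ρ ∧ 0 < f p ∧ f p < (ρ : EReal)),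
          max (sdslope f ρ p) (E p) :=
    le_iSup₂ (f := fun (ρ : ℝ) (_ : 0 < ρ) =>
      ⨅ (p : X × Y) (_ : dist p.1 xbar < ρ ∧ 0 < f p ∧ f p < (ρ : EReal)),
        max (sdslope f ρ p) (E p)) ρ' hρ'pos
  refine le_trans ?_ (add_le_add_left hRHS _)
  apply ereal_le_iInf_add
  · intro p
    exact le_iInf fun _ => le_trans (sdslope_nonneg f ρ' p) (le_max_left _ _)
  intro p
  by_cases hc : dist p.1 xbar < ρ' ∧ 0 < f p ∧ f p < (ρ' : EReal)
  swap
  · rw [iInf_neg hc, EReal.top_add_coe]; exact le_top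
  rw [iInf_pos hc]
  have hcρ : dist p.1 xbar < ρ ∧ 0 < f p ∧ f p < (ρ : EReal) :=
    ⟨lt_of_lt_of_le hc.1 hρ'le, hc.2.1,
      lt_of_lt_of_le hc.2.2 (EReal.coe_le_coe_iff.2 hρ'le)⟩
  refine le_trans (iInf₂_le p hcρ) ?_
  -- max (lslope f ρ p) (E p) ≤ max (sdslope f ρ' p) (E p) + ε
  rw [sdslope, iInf_sup_eq]
  simp only [iInf_sup_eq]
  apply ereal_le_iInf_add
  · intro φ
    exact le_iInf fun _ => le_trans (EReal.coe_nonneg.2 (norm_nonneg _)) le_sup_left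
  intro φ
  by_cases hP : φ ∈ fsubdiff f p ∧ ‖φ.2‖ < ρ'
  swap
  · rw [iInf_neg hP, EReal.top_add_coe]; exact le_top
  rw [iInf_pos hP]
  have hEe : E p ≤ ((‖φ.1‖ : ℝ) : EReal) ⊔ E p + (ε : EReal) := by
    calc E p = E p + 0 := (add_zero _).symm
      _ ≤ E p + (ε : EReal) := add_le_add_right (EReal.coe_nonneg.2 hε.le) _
      _ ≤ ((‖φ.1‖ : ℝ) : EReal) ⊔ E p + (ε : EReal) := add_le_add_left le_sup_right _
  refine max_le ?_ hEe
  have hslope : lslope f ρ p ≤ ((‖φ.1‖ + ‖φ.2‖ / ρ + ε / 2 : ℝ) : EReal) :=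
    lslope_le_subgrad hbot hρ (by linarith) hP.1
  have hnum : ‖φ.1‖ + ‖φ.2‖ / ρ + ε / 2 ≤ ‖φ.1‖ + ε := by
    have h1 : ‖φ.2‖ ≤ ε * ρ / 2 := le_trans hP.2.le (min_le_right _ _)
    have h2 : ‖φ.2‖ / ρ ≤ ε / 2 := by
      rw [div_le_iff₀ hρ]
      calc ‖φ.2‖ ≤ ε * ρ / 2 := h1
        _ = ε / 2 * ρ := by ring
    linarith
  calc lslope f ρ p ≤ ((‖φ.1‖ + ε : ℝ) : EReal) :=
        hslope.trans (EReal.coe_le_coe_iff.2 hnum)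
    _ = ((‖φ.1‖ : ℝ) : EReal) + (ε : EReal) := EReal.coe_add _ _
    _ ≤ ((‖φ.1‖ : ℝ) : EReal) ⊔ E p + (ε : EReal) := add_le_add_left le_sup_left _


/-- in normed spaces,
`\overline{|∇f|}^{>} ≤ \overline{|∂f|}^{>}` and `\overline{|∇f|}^{>+} ≤ \overline{|∂f|}^{>+}`. -/
theorem statement4 {X Y : Type*} [NormedAddCommGroup X] [NormedSpace ℝ X] [NormedAddCommGroup Y] [NormedSpace ℝ Y]
    (f : X × Y → EReal) (xbar : X) (ybar : Y)
    (hbot : ∀ p, f p ≠ ⊥) (h0 : f (xbar, ybar) = 0) :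
    sos f xbar ybar ≤ ssds f xbar ybar ∧ msos f xbar ybar ≤ mssds f xbar ybar := by
  constructor
  · have h := generic_slope_le f xbar hbot (fun _ => (⊥ : EReal))
    simp only [max_eq_left (bot_le : (⊥ : EReal) ≤ _)] at h
    exact h
  · exact generic_slope_le f xbar hbot (fun p => equot (f p) (dist p.1 xbar))

end HolderPaper
end
end

section
/- Under conditions (P1)–(P2), the error bound modulus is bounded above by the uniform strict outer slope: Er f(x̄,ȳ) ≤ \overline{|∇f|}^◇(x̄,ȳ). -/
open Filter Metric Set Topology
open scoped Classical

noncomputable section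

namespace HolderPaper


private lemma equot_nonneg' {a : EReal} (ha : 0 ≤ a) {d : ℝ} (hd : 0 ≤ d) :
    (0 : EReal) ≤ equot a d := by
  rw [equot]
  split_ifs with h
  · exact le_top
  · exact mul_nonneg ha (by exact_mod_cast inv_nonneg.2 hd)

private lemma le_equot_coe {c r d : ℝ} (hr : 0 < r) (hc : 0 < c) (hd0 : 0 ≤ d)
    (hd : d ≤ r / c) : (c : EReal) ≤ equot (r : EReal) d := by
  rw [equot]
  split_ifs with h
  · exact le_top
  · have hd' : 0 < d := lt_of_le_of_ne hd0 (Ne.symm h)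
    rw [← EReal.coe_mul, EReal.coe_le_coe_iff, ← div_eq_mul_inv, le_div_iff₀ hd']
    have h1 : d * c ≤ r := (le_div_iff₀ hc).1 hd
    nlinarith

private lemma lt_of_coe_lt_equot {c r d : ℝ} (hc : 0 < c) (hr : 0 < r) (hd0 : 0 ≤ d)
    (h : (c : EReal) < equot (r : EReal) d) : d < r / c := by
  rcases eq_or_lt_of_le hd0 with h0 | h0
  · rw [← h0]; positivity
  · rw [equot, if_neg (ne_of_gt h0), ← EReal.coe_mul, EReal.coe_lt_coe_iff,
      ← div_eq_mul_inv, lt_div_iff₀ h0] at h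
    rw [lt_div_iff₀ hc]
    nlinarith

/-- under (P1)-(P2), `Er f(xbar,ybar) ≤ \overline{|∇f|}^◇(xbar,ybar)`. -/
theorem statement8 {X Y : Type*} [MetricSpace X] [MetricSpace Y]
    (f : X × Y → EReal) (xbar : X) (ybar : Y)
    (hbot : ∀ p, f p ≠ ⊥) (h0 : f (xbar, ybar) = 0)
    (hP1 : P1 f ybar) (hP2 : P2 f ybar) :
    erMod f xbar ybar ≤ uss f xbar ybar := by
  classical
  set S := Sf f ybar with hSdef
  have hSx : xbar ∈ S := by simp [hSdef, Sf, h0]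
  have hSne : S.Nonempty := ⟨xbar, hSx⟩
  -- Step A: extract α, δ from (P2)
  obtain ⟨α, hα0', hαlt⟩ := EReal.lt_iff_exists_real_btwn.1 hP2
  have hα0 : 0 < α := by exact_mod_cast hα0'
  have hevA := Filter.eventually_lt_of_lt_liminf hαlt
  rw [eventually_comap] at hevA
  obtain ⟨δE, hδE, hδset⟩ :=
    ((nhdsGT_basis_of_exists_gt ⟨1, by norm_num⟩).eventually_iff).1 hevA
  obtain ⟨δ, hδ0', hδlt⟩ := EReal.lt_iff_exists_real_btwn.1 hδE
  have hδ0 : 0 < δ := by exact_mod_cast hδ0'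
  have hA : ∀ p : X × Y, ∀ r : ℝ, f p = (r : EReal) → 0 < r → r < δ →
      dist p.2 ybar < r / α := by
    intro p r hfp hr hrδ
    have hb : (r : EReal) ∈ Set.Ioo (0 : EReal) δE :=
      ⟨by exact_mod_cast hr, lt_trans (by exact_mod_cast hrδ) hδlt⟩
    have := hδset hb p hfp
    rw [hfp] at this
    exact lt_of_coe_lt_equot hα0 hr dist_nonneg this
  -- uss is nonnegative
  have huss0 : (0 : EReal) ≤ uss f xbar ybar := by
    refine le_trans ?_ (le_iSup₂_of_le 1 one_pos le_rfl)
    refine le_iInf fun p => le_iInf fun hp => ?_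
    obtain ⟨hpx, hpf, hpρ⟩ := hp
    have hfp_top : f p ≠ ⊤ := (hpρ.trans (EReal.coe_lt_top 1)).ne
    rw [nslope, if_neg hfp_top]
    have hne : (xbar, ybar) ≠ p := by
      intro h
      rw [← h, h0] at hpf
      exact lt_irrefl _ hpf
    refine le_trans ?_ (le_iSup₂_of_le (xbar, ybar) hne le_rfl)
    exact equot_nonneg' (le_max_right _ _) (le_trans dist_nonneg (le_max_left _ _))
  -- main estimate
  have main : ∀ c : ℝ, 0 < c → (c : EReal) < erMod f xbar ybar →
      (c : EReal) ≤ uss f xbar ybar := by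
    intro c hc hclt
    obtain ⟨c', hcc', hc'lt⟩ := EReal.lt_iff_exists_real_btwn.1 hclt
    have hcc : c < c' := by exact_mod_cast hcc'
    have hc'0 : 0 < c' := hc.trans hcc
    have hevB := Filter.eventually_lt_of_lt_liminf hc'lt
    rw [eventually_inf_principal, eventually_comap, Metric.eventually_nhds_iff] at hevB
    obtain ⟨ε, hε0, hB⟩ := hevB
    set ρ := min ε (min δ (α / c)) with hρdef
    have hρ0 : 0 < ρ := lt_min hε0 (lt_min hδ0 (div_pos hα0 hc))
    refine le_trans ?_ (le_iSup₂_of_le ρ hρ0 le_rfl)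
    refine le_iInf fun p => le_iInf fun hp => ?_
    obtain ⟨hpx, hpf, hpρ⟩ := hp
    have hfp_top : f p ≠ ⊤ := (hpρ.trans (EReal.coe_lt_top ρ)).ne
    set r := (f p).toReal with hrdef
    have hfpr : f p = (r : EReal) := (EReal.coe_toReal hfp_top (hbot p)).symm
    have hr0 : 0 < r := by
      rw [hfpr] at hpf; exact_mod_cast hpf
    have hrρ : r < ρ := by
      rw [hfpr] at hpρ; exact_mod_cast hpρ
    have hdy : dist p.2 ybar < r / α :=
      hA p r hfpr hr0 (hrρ.trans_le (le_trans (min_le_right _ _) (min_le_left _ _)))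
    have hBe : (c' : EReal) < equot (f p) (infDist p.1 S) :=
      hB (lt_of_lt_of_le hpx (min_le_left _ _)) p rfl hpf
    rw [hfpr] at hBe
    have hD : infDist p.1 S < r / c' :=
      lt_of_coe_lt_equot hc'0 hr0 infDist_nonneg hBe
    obtain ⟨u, huS, hu⟩ := (Metric.infDist_lt_iff hSne).1 hD
    have hfq : f (u, ybar) ≤ 0 := huS
    have hqne : (u, ybar) ≠ p := by
      intro h
      rw [← h] at hpf
      exact absurd (lt_of_lt_of_le hpf hfq) (lt_irrefl _)
    rw [nslope, if_neg hfp_top]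
    refine le_trans ?_ (le_iSup₂_of_le (u, ybar) hqne le_rfl)
    have hfplus : fplus f (u, ybar) = 0 := max_eq_right hfq
    rw [hfplus, hfpr]
    have hsub : (r : EReal) - 0 = (r : EReal) := by simp
    rw [hsub, max_eq_left (by exact_mod_cast hr0.le : (0 : EReal) ≤ (r : EReal))]
    refine le_equot_coe hr0 hc (le_trans dist_nonneg (le_max_left _ _)) ?_
    rw [drho]
    apply max_le
    · refine le_trans hu.le ?_
      rw [div_le_div_iff₀ hc'0 hc]
      nlinarith
    · have hρα : ρ ≤ α / c := le_trans (min_le_right _ _) (min_le_right _ _)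
      calc ρ * dist p.2 ybar ≤ (α / c) * (r / α) :=
            mul_le_mul hρα hdy.le dist_nonneg (by positivity)
        _ = r / c := by
            field_simp
  -- conclusion
  by_contra hcon
  push_neg at hcon
  obtain ⟨c, hussc, hcer⟩ := EReal.lt_iff_exists_real_btwn.1 hcon
  rcases le_or_gt c 0 with hc | hc
  · exact absurd (hussc.trans_le (le_trans (by exact_mod_cast hc) huss0)) (lt_irrefl _)
  · exact absurd (main c hc hcer) (not_le.2 hussc)


end HolderPaper
end
end
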